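/- The infinite word γ^ω(0) = 0102010301020104⋯, obtained by iterating the morphism γ(i) = 0·(i+1) starting from the letter 0, is the lexicographically least infinite squarefree word over ℕ: it is squarefree, and every infinite squarefree word over ℕ is lexicographically greater than or equal to it. -/

import Mathlib

/-- The morphism γ : ℕ* → ℕ* with γ(i) = 0·(i+1), applied letterwise to a word. -/
def gammaW (w : List ℕ) : List ℕ := (w.map fun i => [0, i + 1]).flatten

/-- The infinite word γ^ω(0), as a function giving the letter at (0-indexed) position `n`.
Since γ(0) = 0·1 begins with 0, each γ^m(0) is a prefix of γ^(m+1)(0), and γ^(n+1)(0)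
has length 2^(n+1) > n, so its `n`-th letter is the `n`-th letter of γ^ω(0). -/
def gammaOmega : ℕ → ℕ := fun n => (gammaW^[n + 1] [0]).getD n 0


/-- abbreviation for 2-adic valuation -/
def v2 (x : ℕ) : ℕ := padicValNat 2 x

lemma v2_eq_iff {x k : ℕ} (hx : x ≠ 0) : v2 x = k ↔ 2 ^ k ∣ x ∧ ¬ 2 ^ (k+1) ∣ x := by
  have h1 : ∀ n, 2 ^ n ∣ x ↔ n ≤ v2 x := fun n => padicValNat_dvd_iff_le hx
  rw [h1, h1]
  omega

lemma v2_ge_iff {x k : ℕ} (hx : x ≠ 0) : 2 ^ k ∣ x ↔ k ≤ v2 x := padicValNat_dvd_iff_le hx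

/-- key additive lemma -/
lemma v2_add {A B : ℕ} (hB : B ≠ 0) (hA : 2 ^ (v2 B + 1) ∣ A) : v2 (A + B) = v2 B := by
  have hAB : A + B ≠ 0 := by omega
  have h1 : 2 ^ v2 B ∣ B := pow_padicValNat_dvd
  have h2 : ¬ 2 ^ (v2 B + 1) ∣ B := by
    rw [v2_ge_iff hB]; omega
  rw [v2_eq_iff hAB]
  constructor
  · exact dvd_add (dvd_trans (pow_dvd_pow 2 (Nat.le_succ _)) hA) h1
  · intro h
    exact h2 ((Nat.dvd_add_right hA).mp h)

/-- Between two numbers of equal 2-adic valuation lies one of strictly greater valuation. -/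
lemma v2_between {a b : ℕ} (ha : a ≠ 0) (hab : a < b) (h : v2 a = v2 b) :
    ∃ c, a < c ∧ c < b ∧ v2 a < v2 c := by
  have hb : b ≠ 0 := by omega
  set v := v2 a with hv
  obtain ⟨α, hα⟩ : 2 ^ v ∣ a := pow_padicValNat_dvd
  obtain ⟨β, hβ⟩ : 2 ^ v ∣ b := h ▸ pow_padicValNat_dvd
  have hαodd : ¬ 2 ∣ α := by
    intro ⟨m, hm⟩
    have : 2 ^ (v+1) ∣ a := ⟨m, by rw [hα, hm]; ring⟩
    have := (v2_ge_iff ha).mp this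
    omega
  have hβodd : ¬ 2 ∣ β := by
    intro ⟨m, hm⟩
    have : 2 ^ (v+1) ∣ b := ⟨m, by rw [hβ, hm]; ring⟩
    have := (v2_ge_iff hb).mp this
    omega
  have hpow : 0 < 2 ^ v := Nat.pow_pos (by norm_num)
  have hαβ : α < β := by
    by_contra hc
    push_neg at hc
    have : b ≤ a := by rw [hα, hβ]; exact Nat.mul_le_mul_left _ hc
    omega
  have hαβ' : α + 1 < β := by
    rcases Nat.lt_or_ge (α+1) β with h' | h'
    · exact h'
    · have : β = α + 1 := by omega
      subst this
      exact absurd ⟨(α+1)/2, by omega⟩ hβodd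
  refine ⟨2 ^ v * (α + 1), ?_, ?_, ?_⟩
  · rw [hα]; exact (Nat.mul_lt_mul_left hpow).mpr (by omega)
  · rw [hβ]; exact (Nat.mul_lt_mul_left hpow).mpr (by omega)
  · have hc0 : 2 ^ v * (α + 1) ≠ 0 := by positivity
    have : 2 ^ (v+1) ∣ 2 ^ v * (α + 1) := by
      obtain ⟨m, hm⟩ : 2 ∣ α + 1 := by omega
      exact ⟨m, by rw [hm]; ring⟩
    have := (v2_ge_iff hc0).mp this
    omega

/-- the ruler sequence -/
def rv (n : ℕ) : ℕ := v2 (n + 1)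

lemma rv_even (n : ℕ) : rv (2 * n) = 0 :=
  padicValNat.eq_zero_of_not_dvd (by omega)

lemma rv_odd (n : ℕ) : rv (2 * n + 1) = rv n + 1 := by
  unfold rv v2
  have : 2 * n + 1 + 1 = 2 * (n + 1) := by ring
  rw [this, padicValNat.mul (p := 2) (by norm_num) (by omega), padicValNat.self (by norm_num)]
  omega

lemma gammaW_append (a b : List ℕ) : gammaW (a ++ b) = gammaW a ++ gammaW b := by
  simp [gammaW]

lemma gammaW_range (N : ℕ) :
    gammaW ((List.range N).map rv) = (List.range (2 * N)).map rv := by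
  induction N with
  | zero => simp [gammaW]
  | succ N ih =>
    rw [List.range_succ, List.map_append, gammaW_append, ih]
    have h2 : 2 * (N + 1) = (2 * N + 1) + 1 := by ring
    rw [h2, List.range_succ, List.range_succ, List.map_append, List.map_append]
    simp [gammaW, rv_even, rv_odd, List.append_assoc]

lemma gammaW_iter (k : ℕ) : gammaW^[k] [0] = (List.range (2 ^ k)).map rv := by
  induction k with
  | zero =>
    have : rv 0 = 0 := by unfold rv v2; exact padicValNat.eq_zero_of_not_dvd (by omega)
    show [0] = List.map rv [0]
    simp [this]
  | succ k ih =>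
    rw [Function.iterate_succ_apply', ih, gammaW_range]
    congr 1
    rw [pow_succ]
    ring_nf

lemma gammaOmega_eq (n : ℕ) : gammaOmega n = rv n := by
  unfold gammaOmega
  rw [gammaW_iter]
  have hlt : n < 2 ^ (n + 1) := lt_of_lt_of_le (Nat.lt_two_pow_self (n := n)) (Nat.pow_le_pow_right (by norm_num) (by omega))
  have hl : n < ((List.range (2 ^ (n+1))).map rv).length := by simpa using hlt
  rw [List.getD_eq_getElem _ _ hl]
  simp

/-- `x` is a factor (contiguous subword) of the infinite word `f`. -/
def InfFactor (x : List ℕ) (f : ℕ → ℕ) : Prop :=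
  ∃ i, x = (List.range x.length).map fun j => f (i + j)

/-- An infinite word over ℕ is squarefree if none of its factors is a square. -/
def SquarefreeInf (f : ℕ → ℕ) : Prop := ∀ x : List ℕ, x ≠ [] → ¬ InfFactor (x ++ x) f

/-- Lexicographic order on infinite words over ℕ: `f ≤ g` iff `f = g` or they first
differ at a position where `f` has the smaller letter. -/
def LexLeInf (f g : ℕ → ℕ) : Prop :=
  f = g ∨ ∃ n, (∀ m < n, f m = g m) ∧ f n < g n


lemma square_eq {f : ℕ → ℕ} {x : List ℕ} {i : ℕ}
    (h : x ++ x = (List.range (x ++ x).length).map fun j => f (i + j)) :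
    ∀ j < x.length, f (i + j) = f (i + x.length + j) := by
  intro j hj
  have hlen : (x ++ x).length = x.length + x.length := by simp
  have h1 : j < (x ++ x).length := by omega
  have h2 : x.length + j < (x ++ x).length := by omega
  have e1 := List.getElem_of_eq h h1
  have e2 := List.getElem_of_eq h h2
  rw [List.getElem_append_left hj] at e1
  rw [List.getElem_append_right (by omega)] at e2
  simp only [List.getElem_map, List.getElem_range, Nat.add_sub_cancel_left] at e1 e2
  have e3 : i + (x.length + j) = i + x.length + j := by ring
  rw [e3] at e2
  rw [← e1, ← e2]

lemma rv_squarefree : SquarefreeInf (fun n => rv n) := by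
  rintro x hx ⟨i, hfac⟩
  set L := x.length with hL
  have hL1 : 1 ≤ L := List.length_pos_iff.mpr hx
  have key : ∀ j < L, rv (i + j) = rv (i + L + j) := square_eq hfac
  have key2 : ∀ m, i + 1 ≤ m → m ≤ i + L → v2 m = v2 (m + L) := by
    intro m h1 h2
    have h3 := key (m - i - 1) (by omega)
    unfold rv at h3
    have e1 : i + (m - i - 1) + 1 = m := by omega
    have e2 : i + L + (m - i - 1) + 1 = m + L := by omega
    rw [e1, e2] at h3
    exact h3
  obtain ⟨m, hm, hmax⟩ := Finset.exists_max_image (Finset.Icc (i + 1) (i + 2 * L)) v2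
    ⟨i + 1, Finset.mem_Icc.mpr ⟨le_refl _, by omega⟩⟩
  simp only [Finset.mem_Icc] at hm
  rcases le_or_gt m (i + L) with hcase | hcase
  · have heq := key2 m hm.1 hcase
    obtain ⟨c, hc1, hc2, hc3⟩ := v2_between (a := m) (by omega) (by omega) heq
    have := hmax c (Finset.mem_Icc.mpr ⟨by omega, by omega⟩)
    omega
  · have heq := key2 (m - L) (by omega) (by omega)
    have e : m - L + L = m := by omega
    rw [e] at heq
    obtain ⟨c, hc1, hc2, hc3⟩ := v2_between (a := m - L) (by omega) (by omega) heq
    have := hmax c (Finset.mem_Icc.mpr ⟨by omega, by omega⟩)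
    omega

lemma rv_min {g : ℕ → ℕ} (hg : SquarefreeInf g) {n : ℕ}
    (hpre : ∀ m < n, g m = rv m) (hlt : g n < rv n) : False := by
  set c := g n with hc
  set t := 2 ^ c with ht
  have ht1 : 1 ≤ t := Nat.one_le_two_pow
  have hdvd : 2 ^ (c + 1) ∣ n + 1 := by
    rw [v2_ge_iff (by omega)]
    unfold rv at hlt
    omega
  have h2t' : 2 ^ (c + 1) = 2 * t := by rw [ht, pow_succ]; ring
  have h2t : 2 * t ≤ n + 1 := Nat.le_of_dvd (by omega) (h2t' ▸ hdvd)
  set i := n + 1 - 2 * t with hi'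
  have hi : i + 2 * t = n + 1 := by omega
  have hidvd : 2 ^ (c + 1) ∣ i := by
    rw [h2t']
    have h1 : 2 * t ∣ n + 1 := h2t' ▸ hdvd
    exact (Nat.dvd_sub h1 (dvd_refl _))
  obtain ⟨k, hik⟩ := hidvd
  have key : ∀ j < t, g (i + j) = g (i + t + j) := by
    intro j hj
    by_cases hjt : j + 1 = t
    · have hn : i + t + j = n := by omega
      have hlt2 : i + j < n := by omega
      rw [hpre _ hlt2, hn, ← hc]
      show rv (i + j) = c
      unfold rv
      have h3 : i = 2 * t * k := by rw [hik, h2t']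
      have h4 : j + 1 = t := hjt
      have ee1 : i + j + 1 = t * (2 * k + 1) := by rw [h3, ← h4]; ring
      rw [ee1]
      unfold v2
      rw [padicValNat.mul (by omega) (by omega)]
      have hv1 : padicValNat 2 t = c := by rw [ht]; exact padicValNat.prime_pow c
      have hv2 : padicValNat 2 (2 * k + 1) = 0 := padicValNat.eq_zero_of_not_dvd (by omega)
      omega
    · have hj1 : j + 1 < t := by omega
      have h1 : i + j < n := by omega
      have h2 : i + t + j < n := by omega
      rw [hpre _ h1, hpre _ h2]
      show rv (i + j) = rv (i + t + j)
      unfold rv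
      set e := j + 1 with he
      have hve : v2 e < c := by
        by_contra hcon
        push_neg at hcon
        have hd : 2 ^ c ∣ e := (v2_ge_iff (by omega)).mpr hcon
        have := Nat.le_of_dvd (by omega) hd
        omega
      have hiv : 2 ^ (v2 e + 1) ∣ i := dvd_trans (pow_dvd_pow 2 (by omega)) ⟨k, hik⟩
      have ee1 : i + j + 1 = i + e := by omega
      have ee2 : i + t + j + 1 = i + (e + t) := by omega
      rw [ee1, ee2]
      have het : v2 (e + t) = v2 e := by
        rw [Nat.add_comm]
        exact v2_add (by omega) (pow_dvd_pow 2 (by omega))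
      have r1 : v2 (i + e) = v2 e := v2_add (A := i) (B := e) (by omega) hiv
      have r2 : v2 (i + (e + t)) = v2 (e + t) :=
        v2_add (A := i) (B := e + t) (by omega) (by rw [het]; exact hiv)
      rw [r1, r2, het]
  apply hg ((List.range t).map fun j => g (i + j)) (by simp; omega)
  refine ⟨i, ?_⟩
  have hxlen : (((List.range t).map fun j => g (i + j)) ++ ((List.range t).map fun j => g (i + j))).length = t + t := by simp
  rw [hxlen, List.range_add, List.map_append]
  congr 1
  rw [List.map_map]
  apply List.map_congr_left
  intro j hj
  rw [List.mem_range] at hj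
  show g (i + j) = g (i + (t + j))
  have : i + (t + j) = i + t + j := by ring
  rw [this]
  exact key j hj

/-- γ^ω(0) is the lexicographically least infinite squarefree word over ℕ. -/
theorem gammaOmega_lex_least_squarefree :
    SquarefreeInf gammaOmega ∧ ∀ g : ℕ → ℕ, SquarefreeInf g → LexLeInf gammaOmega g := by
  have hEq : gammaOmega = fun n => rv n := funext gammaOmega_eq
  constructor
  · rw [hEq]
    exact rv_squarefree
  · intro g hg
    rw [hEq]
    by_cases hall : ∀ n, rv n = g n
    · exact Or.inl (funext hall)
    · push_neg at hall
      have hex : ∃ n, rv n ≠ g n := hall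
      refine Or.inr ⟨Nat.find hex, fun m hm => not_not.mp (Nat.find_min hex hm), ?_⟩
      show rv (Nat.find hex) < g (Nat.find hex)
      have hne := Nat.find_spec hex
      by_contra hcon
      push_neg at hcon
      have hglt : g (Nat.find hex) < rv (Nat.find hex) := by omega
      exact rv_min hg (fun m hm => (not_not.mp (Nat.find_min hex hm)).symm) hglt
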